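/- Let q ≡ 1 (mod 3) be an odd prime power and F = 𝔽_q with q ≡ 1 (mod 4). The number of points (X,Y,Z) ∈ F³ with X+Z ≠ 0 and (X+Z)(Y²+XZ) = 1 equals (q−1)² + 3q. -/

import Mathlib

open Finset

section Aux
variable {F : Type*} [Field F] [Fintype F]

lemma aux_two_ne_zero (hq4 : Fintype.card F % 4 = 1) : (2 : F) ≠ 0 := by
  intro h2
  have hdvd : ringChar F ∣ 2 := ringChar.dvd (by exact_mod_cast h2)
  have h1 : ringChar F ≠ 1 := CharP.char_ne_one F (ringChar F)
  have hch : ringChar F = 2 := by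
    rcases (Nat.dvd_prime Nat.prime_two).mp hdvd with h | h <;> omega
  have := FiniteField.even_card_of_char_two hch
  omega

lemma aux_card_ne_zero : Nat.card {a : F // a ≠ 0} = Fintype.card F - 1 := by
  classical
  rw [Nat.card_congr unitsEquivNeZero.symm, Nat.card_eq_fintype_card, Fintype.card_units]

lemma aux_card_hyp (c : F) (hc : c ≠ 0) :
    Nat.card {ab : F × F // ab.1 * ab.2 = c} = Fintype.card F - 1 := by
  have e : {ab : F × F // ab.1 * ab.2 = c} ≃ {a : F // a ≠ 0} :=
    { toFun := fun x => ⟨x.1.1, fun h => hc (by rw [← x.2, h, zero_mul])⟩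
      invFun := fun a => ⟨(a.1, c * a.1⁻¹), by
        have := a.2; field_simp⟩
      left_inv := by
        rintro ⟨⟨a, b⟩, hab⟩
        have ha : a ≠ 0 := fun h => hc (by rw [← hab, h, zero_mul])
        apply Subtype.ext
        apply Prod.ext
        · rfl
        · show c * a⁻¹ = b
          rw [← hab]; field_simp
      right_inv := fun a => rfl }
  rw [Nat.card_congr e, aux_card_ne_zero]

lemma aux_card_hyp0 :
    Nat.card {ab : F × F // ab.1 * ab.2 = 0} = 2 * Fintype.card F - 1 := by
  classical
  rw [Nat.card_eq_fintype_card, Fintype.card_subtype]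
  have h : (univ.filter fun ab : F × F => ab.1 * ab.2 = 0)
      = (({0} : Finset F) ×ˢ univ) ∪ (univ ×ˢ ({0} : Finset F)) := by
    ext ⟨a, b⟩
    simp [mul_eq_zero, eq_comm]
  have h2 : ((({0} : Finset F) ×ˢ univ) ∩ (univ ×ˢ ({0} : Finset F)))
      = (({0} : Finset F) ×ˢ ({0} : Finset F)) := by
    ext ⟨a, b⟩; simp [eq_comm (a := (0:F))]
  have h3 := Finset.card_union_add_card_inter
    ((({0} : Finset F) ×ˢ univ)) ((univ ×ˢ ({0} : Finset F)))
  rw [h2] at h3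
  simp only [card_product, card_singleton, one_mul, mul_one, card_univ] at h3
  have hpos : 0 < Fintype.card F := Fintype.card_pos
  rw [h]
  omega


open Polynomial in
lemma aux_card_cube [DecidableEq F] (hq3 : Fintype.card F % 3 = 1)
    (hcube : ∃ t : F, t ^ 3 = 2) (h2 : (2 : F) ≠ 0) :
    (univ.filter fun s : F => s ^ 3 = 4).card = 3 := by
  have hq2 : 2 ≤ Fintype.card F := Fintype.one_lt_card
  have h3dvd : 3 ∣ Fintype.card F - 1 := by omega
  obtain ⟨g, hg⟩ := IsCyclic.exists_ofOrder_eq_natCard (α := Fˣ)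
  have hcardu : Nat.card Fˣ = Fintype.card F - 1 := by
    rw [Nat.card_eq_fintype_card, Fintype.card_units]
  rw [hcardu] at hg
  set n : ℕ := (Fintype.card F - 1) / 3 with hn
  have hn0 : n ≠ 0 := by
    have : 4 ≤ Fintype.card F := by omega
    omega
  have hndvd : n ∣ orderOf g := by rw [hg]; exact Nat.div_dvd_of_dvd h3dvd
  have horder : orderOf (g ^ n) = 3 := by
    rw [orderOf_pow_of_dvd hn0 hndvd, hg, hn,
      Nat.div_div_self h3dvd (by omega)]
  have horderF : orderOf ((g ^ n : Fˣ) : F) = 3 := by rw [orderOf_units]; exact horder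
  have hprim : IsPrimitiveRoot ((g ^ n : Fˣ) : F) 3 := by
    have := IsPrimitiveRoot.orderOf ((g ^ n : Fˣ) : F)
    rwa [horderF] at this
  have hroots1 : (univ.filter fun x : F => x ^ 3 = 1).card = 3 := by
    have hset : (univ.filter fun x : F => x ^ 3 = 1) = nthRootsFinset 3 (1 : F) := by
      ext x
      rw [Polynomial.mem_nthRootsFinset (by norm_num)]
      simp
    rw [hset, hprim.card_nthRootsFinset]
  obtain ⟨t, ht⟩ := hcube
  have ht0 : t ≠ 0 := by rintro rfl; exact h2 (by rw [← ht]; ring)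
  have ht2 : t ^ 2 ≠ 0 := pow_ne_zero _ ht0
  have ht6 : (t ^ 2) ^ 3 = 4 := by
    rw [← pow_mul, show 2 * 3 = 3 * 2 from rfl, pow_mul, ht]; norm_num
  have h4 : (4 : F) ≠ 0 := by
    rw [show (4 : F) = 2 * 2 by norm_num]; exact mul_ne_zero h2 h2
  have hb : (univ.filter fun s : F => s ^ 3 = 4).card
      = (univ.filter fun x : F => x ^ 3 = 1).card := by
    apply Finset.card_bij' (fun s _ => (t ^ 2)⁻¹ * s) (fun x _ => t ^ 2 * x)
    · intro s _; field_simp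
    · intro x _; field_simp
    · intro s hs
      simp only [mem_filter, mem_univ, true_and] at hs ⊢
      rw [mul_pow, inv_pow, ht6, hs, inv_mul_cancel₀ h4]
    · intro x hx
      simp only [mem_filter, mem_univ, true_and] at hx ⊢
      rw [mul_pow, ht6, hx, mul_one]
  rw [hb, hroots1]

end Aux

/-- Let `F = 𝔽_q` with `q ≡ 1 (mod 4)` and `q ≡ 1 (mod 3)`, and suppose `2` is
a cube in `F` (so that `a³ = 4` has three solutions).  Then the number of points
`(X,Y,Z) ∈ F³` with `X+Z ≠ 0` and `(X+Z)(Y²+XZ) = 1` equals `(q−1)² + 3q`. -/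
theorem card_X1 (F : Type*) [Field F] [Fintype F]
    (hq4 : Fintype.card F % 4 = 1) (hq3 : Fintype.card F % 3 = 1)
    (hcube : ∃ t : F, t ^ 3 = 2) :
    Nat.card
        {p : F × F × F // p.1 + p.2.2 ≠ 0 ∧
          (p.1 + p.2.2) * (p.2.1 ^ 2 + p.1 * p.2.2) = 1} =
      (Fintype.card F - 1) ^ 2 + 3 * Fintype.card F := by
  classical
  have h2 : (2 : F) ≠ 0 := aux_two_ne_zero hq4
  have h4 : (4 : F) ≠ 0 := by
    rw [show (4 : F) = 2 * 2 by norm_num]; exact mul_ne_zero h2 h2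
  set q := Fintype.card F with hq
  have hq2 : 2 ≤ q := Fintype.one_lt_card
  have hq13 : 13 ≤ q := by omega
  -- Step 1: change of variables
  have E : {p : F × F × F // p.1 + p.2.2 ≠ 0 ∧
        (p.1 + p.2.2) * (p.2.1 ^ 2 + p.1 * p.2.2) = 1}
      ≃ {p : F × F × F // p.1 ≠ 0 ∧ p.2.1 * p.2.2 = p.1⁻¹ - p.1 ^ 2 / 4} :=
    { toFun := fun x => ⟨(x.1.1 + x.1.2.2,
        x.1.2.1 - (x.1.1 - (x.1.1 + x.1.2.2) / 2),
        x.1.2.1 + (x.1.1 - (x.1.1 + x.1.2.2) / 2)), by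
          obtain ⟨⟨X, Y, Z⟩, hs, h⟩ := x
          refine ⟨hs, ?_⟩
          show (Y - (X - (X + Z) / 2)) * (Y + (X - (X + Z) / 2))
              = (X + Z)⁻¹ - (X + Z) ^ 2 / 4
          replace hs : X + Z ≠ 0 := hs
          replace h : (X + Z) * (Y ^ 2 + X * Z) = 1 := h
          field_simp
          linear_combination 16 * h⟩
      invFun := fun x => ⟨((x.1.2.2 - x.1.2.1) / 2 + x.1.1 / 2,
        (x.1.2.1 + x.1.2.2) / 2,
        x.1.1 / 2 - (x.1.2.2 - x.1.2.1) / 2), by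
          obtain ⟨⟨s, a, b⟩, hs, hab⟩ := x
          replace hs : s ≠ 0 := hs
          replace hab : a * b = s⁻¹ - s ^ 2 / 4 := hab
          have hsum : ((b - a) / 2 + s / 2) + (s / 2 - (b - a) / 2) = s := by
            field_simp
            ring
          constructor
          · show ((b - a) / 2 + s / 2) + (s / 2 - (b - a) / 2) ≠ 0
            rw [hsum]; exact hs
          · show (((b - a) / 2 + s / 2) + (s / 2 - (b - a) / 2)) *
              (((a + b) / 2) ^ 2 + ((b - a) / 2 + s / 2) * (s / 2 - (b - a) / 2)) = 1
            have hab' : 4 * s * (a * b) = 4 - s ^ 3 := by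
              field_simp at hab
              linear_combination hab
            field_simp
            linear_combination 2 * hab'⟩
      left_inv := by
        rintro ⟨⟨X, Y, Z⟩, h⟩
        apply Subtype.ext
        simp only [Prod.mk.injEq]
        refine ⟨by field_simp; ring, by field_simp; ring, by field_simp; ring⟩
      right_inv := by
        rintro ⟨⟨s, a, b⟩, h⟩
        apply Subtype.ext
        simp only [Prod.mk.injEq]
        refine ⟨by field_simp; ring, by field_simp; ring, by field_simp; ring⟩ }
  rw [Nat.card_congr E,
    Nat.card_congr (Equiv.subtypeProdEquivSigmaSubtype
      (fun (s : F) (ab : F × F) => s ≠ 0 ∧ ab.1 * ab.2 = s⁻¹ - s ^ 2 / 4)),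
    Nat.card_eq_fintype_card, Fintype.card_sigma]
  -- Step 2: evaluate the fiber counts
  have hfib : ∀ s : F,
      Fintype.card {ab : F × F // s ≠ 0 ∧ ab.1 * ab.2 = s⁻¹ - s ^ 2 / 4}
        = if s ^ 3 = 4 then 2 * q - 1 else if s = 0 then 0 else q - 1 := by
    intro s
    by_cases hs : s = 0
    · subst hs
      have h034 : (0 : F) ^ 3 ≠ 4 := by
        rw [show (0 : F) ^ 3 = 0 by ring]; exact fun h => h4 h.symm
      rw [if_neg h034, if_pos rfl]
      have : IsEmpty {ab : F × F // (0 : F) ≠ 0 ∧ ab.1 * ab.2 = (0 : F)⁻¹ - (0:F) ^ 2 / 4} :=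
        ⟨fun x => x.2.1 rfl⟩
      exact Fintype.card_eq_zero
    · rw [if_neg hs]
      have ecard : Fintype.card {ab : F × F // s ≠ 0 ∧ ab.1 * ab.2 = s⁻¹ - s ^ 2 / 4}
          = Nat.card {ab : F × F // ab.1 * ab.2 = s⁻¹ - s ^ 2 / 4} := by
        rw [← Nat.card_eq_fintype_card]
        exact Nat.card_congr (Equiv.subtypeEquivRight (fun ab => by simp [hs]))
      by_cases hc : s ^ 3 = 4
      · rw [if_pos hc, ecard]
        have hc0 : s⁻¹ - s ^ 2 / 4 = 0 := by
          field_simp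
          linear_combination -hc
        rw [hc0, aux_card_hyp0]
      · rw [if_neg hc, ecard]
        have hc0 : s⁻¹ - s ^ 2 / 4 ≠ 0 := by
          intro h
          apply hc
          field_simp at h
          linear_combination -h
        exact aux_card_hyp _ hc0
  calc ∑ s : F, Fintype.card {ab : F × F // s ≠ 0 ∧ ab.1 * ab.2 = s⁻¹ - s ^ 2 / 4}
      = ∑ s : F, if s ^ 3 = 4 then 2 * q - 1 else if s = 0 then 0 else q - 1 := by
        exact Finset.sum_congr rfl fun s _ => hfib s
    _ = (q - 1) ^ 2 + 3 * q := by
        rw [Finset.sum_ite, Finset.sum_ite]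
        have hcube3 : (univ.filter fun s : F => s ^ 3 = 4).card = 3 :=
          aux_card_cube hq3 hcube h2
        have hzero : (univ.filter fun s : F => ¬ s ^ 3 = 4).filter (fun s => s = 0)
            = ({0} : Finset F) := by
          ext z
          simp only [mem_filter, mem_univ, true_and, mem_singleton]
          constructor
          · rintro ⟨-, h⟩; exact h
          · rintro rfl
            refine ⟨?_, rfl⟩
            rw [show (0 : F) ^ 3 = 0 by ring]
            exact fun h => h4 h.symm
        have hnotcube : (univ.filter fun s : F => ¬ s ^ 3 = 4).card = q - 3 := by
          have := Finset.card_filter_add_card_filter_not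
            (s := (univ : Finset F)) (p := fun s => s ^ 3 = 4)
          rw [hcube3, Finset.card_univ] at this
          omega
        have hrest : ((univ.filter fun s : F => ¬ s ^ 3 = 4).filter fun s => ¬ s = 0).card
            = q - 4 := by
          have := Finset.card_filter_add_card_filter_not
            (s := (univ.filter fun s : F => ¬ s ^ 3 = 4)) (p := fun s => s = 0)
          rw [hzero, Finset.card_singleton, hnotcube] at this
          omega
        rw [Finset.sum_const, Finset.sum_const, Finset.sum_const,
          hcube3, hzero, Finset.card_singleton, hrest]
        simp only [smul_eq_mul, mul_zero, one_mul]
        have h1 : 1 ≤ q := by omega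
        have h1' : 1 ≤ 2 * q := by omega
        have h3 : 3 ≤ q := by omega
        have h44 : 4 ≤ q := by omega
        zify [h1, h1', h3, h44]
        ring
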